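/- Suppose two joint distributions p_train and p_ideal on 𝒳 × 𝒴 satisfy p_train(Y|X=x) = p_ideal(Y|X=x) for all x in the support of p_train (covariate shift only). If T_ideal is a sufficient statistic of X for Y under p_ideal, then for every x in the support of p_train and every y, p_train(y | T_ideal(x)) = p_ideal(y | T_ideal(x)). -/

import Mathlib

open Finset

noncomputable section

variable {𝒳 𝒴 𝒯 : Type*}

/-- Marginal distribution of `X` under the joint distribution `p`. -/
def margX [Fintype 𝒴] (p : 𝒳 → 𝒴 → ℝ) (x : 𝒳) : ℝ := ∑ y, p x y

/-- Probability that the statistic `T(X) = t`. -/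
def probT [Fintype 𝒳] [Fintype 𝒴] [DecidableEq 𝒯] (p : 𝒳 → 𝒴 → ℝ) (f : 𝒳 → 𝒯) (t : 𝒯) : ℝ :=
  ∑ x, if f x = t then margX p x else 0

/-- Joint probability that `Y = y` and `T(X) = t`. -/
def probYT [Fintype 𝒳] [DecidableEq 𝒯] (p : 𝒳 → 𝒴 → ℝ) (f : 𝒳 → 𝒯) (y : 𝒴) (t : 𝒯) : ℝ :=
  ∑ x, if f x = t then p x y else 0

/-- `T` is a sufficient statistic of `X` for `Y`: `p(y | T(x), x) = p(y | T(x))`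
(conditioning on `(T(x), x)` is conditioning on `x`, since `T` is deterministic). -/
def Sufficient [Fintype 𝒳] [Fintype 𝒴] [DecidableEq 𝒯] (p : 𝒳 → 𝒴 → ℝ) (f : 𝒳 → 𝒯) : Prop :=
  ∀ x y, 0 < margX p x →
    p x y / margX p x = probYT p f y (f x) / probT p f (f x)

/-- Under covariate shift only, if `T_ideal` is sufficient under `p_ideal`,
then for every `x` in the support of `p_train` and every `y`,
`p_train(y | T_ideal(x)) = p_ideal(y | T_ideal(x))`. -/
theorem covariate_shift_cond_on_statistic_eq
    {𝒯i : Type*} [Fintype 𝒳] [Fintype 𝒴] [DecidableEq 𝒯i]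
    (ptr pid : 𝒳 → 𝒴 → ℝ)
    (htr0 : ∀ x y, 0 ≤ ptr x y) (htr1 : ∑ x, ∑ y, ptr x y = 1)
    (hid0 : ∀ x y, 0 ≤ pid x y) (hid1 : ∑ x, ∑ y, pid x y = 1)
    (hsupp : ∀ x, 0 < margX ptr x → 0 < margX pid x)
    (hcond : ∀ x y, 0 < margX ptr x → ptr x y / margX ptr x = pid x y / margX pid x)
    (Tid : 𝒳 → 𝒯i) (hTid : Sufficient pid Tid) :
    ∀ x y, 0 < margX ptr x →
      probYT ptr Tid y (Tid x) / probT ptr Tid (Tid x) =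
        probYT pid Tid y (Tid x) / probT pid Tid (Tid x) := by
  intro x y hx
  set t := Tid x with ht
  set r := probYT pid Tid y t / probT pid Tid t with hr
  -- every x' with Tid x' = t satisfies ptr x' y = r * margX ptr x'
  have hmarg_nonneg : ∀ x', (0:ℝ) ≤ margX ptr x' := fun x' =>
    Finset.sum_nonneg (fun y' _ => htr0 x' y')
  have key : ∀ x', Tid x' = t → ptr x' y = r * margX ptr x' := by
    intro x' hx'
    rcases lt_or_eq_of_le (hmarg_nonneg x') with hpos | hzero
    · have hpid := hsupp x' hpos
      have h1 := hcond x' y hpos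
      have h2 := hTid x' y hpid
      rw [hx'] at h2
      have : ptr x' y / margX ptr x' = r := by rw [h1, h2]
      field_simp at this
      linarith [this]
    · have hle : ptr x' y ≤ margX ptr x' :=
        Finset.single_le_sum (fun y' _ => htr0 x' y') (Finset.mem_univ y)
      have h0 : ptr x' y = 0 := le_antisymm (by rw [← hzero] at hle; exact hle) (htr0 x' y)
      rw [h0, ← hzero, mul_zero]
  -- probYT ptr = r * probT ptr
  have hsum : probYT ptr Tid y t = r * probT ptr Tid t := by
    unfold probYT probT
    rw [Finset.mul_sum]
    apply Finset.sum_congr rfl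
    intro x' _
    by_cases h : Tid x' = t
    · simp [h, key x' h]
    · simp [h]
  -- probT ptr t > 0
  have hTpos : 0 < probT ptr Tid t := by
    have hle : margX ptr x ≤ probT ptr Tid t := by
      have := Finset.single_le_sum
        (f := fun x' => if Tid x' = t then margX ptr x' else 0)
        (fun x' _ => by split <;> simp [hmarg_nonneg]) (Finset.mem_univ x)
      simpa [probT, ht] using this
    linarith
  rw [hsum, mul_div_assoc, div_self (ne_of_gt hTpos), mul_one, hr]
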